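/- Let F be a finite field and u, v, n, t positive integers with n ≤ min{u, v} and t + n = u + v. Suppose A₁, A₂ ∈ M_{n×u}(F), B ∈ M_{n×v}(F), D₁, D₂ ∈ M_{t×u}(F) satisfy rank(B A₁) = rank(B A₂) = n and rank of the vertical block (A₁; D₁) = rank(A₂; D₂) = u. Then there exists C ∈ M_{t×v}(F) such that both block matrices (B A₁; C D₁) and (B A₂; C D₂) are invertible, except when |F| = 2, n = v and det B ≠ 0. -/

import Mathlib

open Module Matrix

section Helpers

variable {F : Type*} [Field F]

/-- A vector space is not the union of two proper subspaces. -/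
private lemma escape_two {V : Type*} [AddCommGroup V] [Module F V]
    (P₁ P₂ : Submodule F V) (h₁ : P₁ ≠ ⊤) (h₂ : P₂ ≠ ⊤) :
    ∃ x, x ∉ P₁ ∧ x ∉ P₂ := by
  obtain ⟨a, ha⟩ : ∃ a, a ∉ P₁ := by
    by_contra h; push_neg at h; exact h₁ (Submodule.eq_top_iff'.2 h)
  obtain ⟨c, hc⟩ : ∃ c, c ∉ P₂ := by
    by_contra h; push_neg at h; exact h₂ (Submodule.eq_top_iff'.2 h)
  by_cases hab : a ∉ P₂
  · exact ⟨a, ha, hab⟩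
  by_cases hcb : c ∉ P₁
  · exact ⟨c, hcb, hc⟩
  push_neg at hab hcb
  refine ⟨a + c, fun h => ?_, fun h => ?_⟩
  · exact ha (by simpa using P₁.sub_mem h hcb)
  · exact hc (by simpa using P₂.sub_mem h hab)

/-- Two subspaces of small enough dimension admit a common disjoint subspace of
any admissible dimension. -/
private lemma exists_disjoint {V : Type*} [AddCommGroup V] [Module F V] [FiniteDimensional F V]
    (k : ℕ) (T₁ T₂ : Submodule F V) (h₁ : finrank F T₁ + k ≤ finrank F V)
    (h₂ : finrank F T₂ + k ≤ finrank F V) :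
    ∃ L : Submodule F V, finrank F L = k ∧ Disjoint T₁ L ∧ Disjoint T₂ L := by
  induction k with
  | zero => exact ⟨⊥, finrank_bot F V, disjoint_bot_right, disjoint_bot_right⟩
  | succ k ih =>
    obtain ⟨L, hLr, hd₁, hd₂⟩ := ih (by omega) (by omega)
    have hne : ∀ (T : Submodule F V), Disjoint T L →
        finrank F T + (k + 1) ≤ finrank F V → T ⊔ L ≠ ⊤ := by
      intro T hd hT htop
      have hr := Submodule.finrank_sup_add_finrank_inf_eq T L
      rw [htop, disjoint_iff.mp hd, finrank_bot, finrank_top] at hr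
      omega
    obtain ⟨x, hx₁, hx₂⟩ := escape_two (T₁ ⊔ L) (T₂ ⊔ L) (hne T₁ hd₁ h₁) (hne T₂ hd₂ h₂)
    have hx0 : x ≠ 0 := fun h => hx₁ (h ▸ Submodule.zero_mem _)
    have hinf : L ⊓ (F ∙ x) = ⊥ := by
      rw [eq_bot_iff]
      rintro z ⟨hzL, hzx⟩
      obtain ⟨c, rfl⟩ := Submodule.mem_span_singleton.mp hzx
      rcases eq_or_ne c 0 with rfl | hc
      · simp
      · exfalso
        apply hx₁
        have hxL : x ∈ L := by
          simpa [smul_smul, inv_mul_cancel₀ hc] using L.smul_mem c⁻¹ hzL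
        exact Submodule.mem_sup_right hxL
    have hrank : finrank F ↥(L ⊔ (F ∙ x)) = k + 1 := by
      have hr := Submodule.finrank_sup_add_finrank_inf_eq L (F ∙ x)
      rw [hinf, finrank_bot, finrank_span_singleton hx0, hLr] at hr
      omega
    have hdisj : ∀ (T : Submodule F V), Disjoint T L → x ∉ T ⊔ L →
        Disjoint T (L ⊔ (F ∙ x)) := by
      intro T hd hx
      rw [Submodule.disjoint_def]
      intro z hzT hz
      obtain ⟨l, hl, s, hs, rfl⟩ := Submodule.mem_sup.mp hz
      obtain ⟨c, rfl⟩ := Submodule.mem_span_singleton.mp hs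
      rcases eq_or_ne c 0 with rfl | hc
      · have hl0 : l = 0 := Submodule.disjoint_def.mp hd l (by simpa using hzT) hl
        simp [hl0]
      · exfalso
        apply hx
        have hmem : (l + c • x) - l ∈ T ⊔ L :=
          Submodule.sub_mem _ (Submodule.mem_sup_left hzT) (Submodule.mem_sup_right hl)
        have hcx : c • x ∈ T ⊔ L := by simpa using hmem
        simpa [smul_smul, inv_mul_cancel₀ hc] using (T ⊔ L).smul_mem c⁻¹ hcx
    exact ⟨L ⊔ (F ∙ x), hrank, hdisj T₁ hd₁ hx₁, hdisj T₂ hd₂ hx₂⟩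

variable [Fintype F] [DecidableEq F]

/-- The number of `t × n` matrices with a prescribed evaluation at a nonzero vector is at most
`|F| ^ (t * (n-1))`. -/
private lemma card_fixed_mulVec {t n : ℕ} (w : Fin n → F) (hw : w ≠ 0) (c : Fin t → F)
    (s : Finset (Matrix (Fin t) (Fin n) F)) (hs : ∀ X ∈ s, X *ᵥ w = c) :
    s.card ≤ Fintype.card F ^ (t * (n - 1)) := by
  classical
  obtain ⟨j, hj⟩ : ∃ j, w j ≠ 0 := by
    by_contra h; push_neg at h; exact hw (funext h)
  have hcard : Fintype.card (Fin t → {k : Fin n // k ≠ j} → F)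
      = Fintype.card F ^ (t * (n - 1)) := by
    rw [Fintype.card_fun, Fintype.card_fun, Fintype.card_fin]
    have hsub : Fintype.card {k : Fin n // k ≠ j} = n - 1 := by
      rw [Fintype.card_subtype, Finset.filter_ne', Finset.card_erase_of_mem (Finset.mem_univ _),
        Finset.card_univ, Fintype.card_fin]
    rw [hsub, ← pow_mul, Nat.mul_comm]
  have hinj : Set.InjOn (fun (X : Matrix (Fin t) (Fin n) F)
      (i : Fin t) (k : {k : Fin n // k ≠ j}) => X i k.1) s := by
    intro X₁ h₁ X₂ h₂ hf
    have hoff : ∀ (i : Fin t) (k : Fin n), k ≠ j → X₁ i k = X₂ i k := by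
      intro i k hk
      exact congrFun (congrFun hf i) ⟨k, hk⟩
    ext i k
    by_cases hk : k = j
    · subst hk
      have e₁ := congrFun (hs X₁ h₁) i
      have e₂ := congrFun (hs X₂ h₂) i
      simp only [Matrix.mulVec, dotProduct] at e₁ e₂
      rw [← Finset.sum_erase_add _ _ (Finset.mem_univ k)] at e₁ e₂
      have hsum : ∑ l ∈ Finset.univ.erase k, X₁ i l * w l
          = ∑ l ∈ Finset.univ.erase k, X₂ i l * w l :=
        Finset.sum_congr rfl fun l hl => by
          rw [hoff i l (Finset.ne_of_mem_erase hl)]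
      have hmul : X₁ i k * w k = X₂ i k * w k := by
        have h := e₁.trans e₂.symm
        rw [hsum] at h
        exact add_left_cancel h
      exact mul_right_cancel₀ hj hmul
    · exact hoff i k hk
  have hle := Finset.card_le_card_of_injOn (t := Finset.univ)
    (fun (X : Matrix (Fin t) (Fin n) F) (i : Fin t) (k : {k : Fin n // k ≠ j}) => X i k.1)
    (fun X _ => Finset.mem_univ _) hinj
  rwa [Finset.card_univ, hcard] at hle

/-- Double counting bound for the set of "bad" matrices `X`. -/
private lemma bad_card {u n t : ℕ} (A : Matrix (Fin n) (Fin u) F) (D : Matrix (Fin t) (Fin u) F)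
    (W : Submodule F (Fin n → F))
    (hinj : ∀ y, A *ᵥ y = 0 → D *ᵥ y = 0 → y = 0)
    (d : ℕ) (hY : finrank F (Submodule.comap A.mulVecLin W) ≤ d)
    (s : Finset (Matrix (Fin t) (Fin n) F))
    (hs : ∀ X ∈ s, ∃ y, y ≠ 0 ∧ A *ᵥ y ∈ W ∧ D *ᵥ y = X *ᵥ (A *ᵥ y)) :
    s.card * (Fintype.card F - 1)
      ≤ (Fintype.card F ^ d - 1) * Fintype.card F ^ (t * (n - 1)) := by
  classical
  set wit : Finset (Fin u → F) := Finset.univ.filter (fun y => y ≠ 0 ∧ A *ᵥ y ∈ W) with hwit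
  have key := Finset.card_mul_le_card_mul
    (r := fun (X : Matrix (Fin t) (Fin n) F) (y : Fin u → F) =>
      y ≠ 0 ∧ A *ᵥ y ∈ W ∧ D *ᵥ y = X *ᵥ (A *ᵥ y)) (s := s) (t := wit)
    (m := Fintype.card F - 1) (n := Fintype.card F ^ (t * (n - 1))) ?_ ?_
  · -- bound the cardinality of `wit`
    have hFin : Fintype ↥(Submodule.comap A.mulVecLin W) := Fintype.ofFinite _
    have hwc : wit.card ≤ Fintype.card F ^ d - 1 := by
      have hYcard : Fintype.card ↥(Submodule.comap A.mulVecLin W)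
          = Fintype.card F ^ (finrank F ↥(Submodule.comap A.mulVecLin W)) :=
        card_eq_pow_finrank (K := F)
      have h1 : wit.card ≤ ((Finset.univ : Finset ↥(Submodule.comap A.mulVecLin W)).erase 0).card := by
        rw [← Finset.card_attach (s := wit)]
        apply Finset.card_le_card_of_injOn
          (fun y => (⟨y.1, Submodule.mem_comap.mpr (by
              rw [Matrix.mulVecLin_apply]
              exact ((Finset.mem_filter.mp y.2).2).2)⟩ :
            ↥(Submodule.comap A.mulVecLin W)))
        · intro y _
          refine Finset.mem_erase.mpr ⟨?_, Finset.mem_univ _⟩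
          have hy0 := ((Finset.mem_filter.mp y.2).2).1
          exact fun h => hy0 (by simpa using congrArg Subtype.val h)
        · intro y₁ _ y₂ _ h
          exact Subtype.ext (by simpa using congrArg Subtype.val h)
      have h2 : ((Finset.univ : Finset ↥(Submodule.comap A.mulVecLin W)).erase 0).card
          = Fintype.card ↥(Submodule.comap A.mulVecLin W) - 1 := by
        rw [Finset.card_erase_of_mem (Finset.mem_univ _), Finset.card_univ]
      have h3 : Fintype.card F ^ (finrank F ↥(Submodule.comap A.mulVecLin W))
          ≤ Fintype.card F ^ d :=
        Nat.pow_le_pow_right Fintype.card_pos hY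
      omega
    calc s.card * (Fintype.card F - 1)
        ≤ wit.card * Fintype.card F ^ (t * (n - 1)) := key
      _ ≤ (Fintype.card F ^ d - 1) * Fintype.card F ^ (t * (n - 1)) :=
          Nat.mul_le_mul_right _ hwc
  · -- each bad `X` has at least `q - 1` witnesses
    intro X hX
    obtain ⟨y₀, hy0, hyW, hyeq⟩ := hs X hX
    have h1 : ((Finset.univ : Finset F).erase 0).card = Fintype.card F - 1 := by
      rw [Finset.card_erase_of_mem (Finset.mem_univ _), Finset.card_univ]
    rw [← h1]
    apply Finset.card_le_card_of_injOn (fun lam => lam • y₀)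
    · intro lam hlam
      have hlam0 : lam ≠ 0 := (Finset.mem_erase.mp hlam).1
      rw [Finset.mem_coe, Finset.mem_bipartiteAbove]
      constructor
      · refine Finset.mem_filter.mpr ⟨Finset.mem_univ _, smul_ne_zero hlam0 hy0, ?_⟩
        rw [Matrix.mulVec_smul]
        exact W.smul_mem _ hyW
      · refine ⟨smul_ne_zero hlam0 hy0, ?_, ?_⟩
        · rw [Matrix.mulVec_smul]
          exact W.smul_mem _ hyW
        · rw [Matrix.mulVec_smul, Matrix.mulVec_smul, Matrix.mulVec_smul, hyeq]
    · intro l₁ _ l₂ _ h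
      have h' : l₁ • y₀ = l₂ • y₀ := h
      have hsub : (l₁ - l₂) • y₀ = 0 := by rw [sub_smul, h', sub_self]
      rcases smul_eq_zero.mp hsub with h' | h'
      · exact sub_eq_zero.mp h'
      · exact absurd h' hy0
  · -- each witness `y` admits at most `q ^ (t*(n-1))` bad `X`s
    intro y hy
    obtain ⟨hy0, hyW⟩ := (Finset.mem_filter.mp hy).2
    by_cases hAy : A *ᵥ y = 0
    · have hemp : s.bipartiteBelow
          (fun X y => y ≠ 0 ∧ A *ᵥ y ∈ W ∧ D *ᵥ y = X *ᵥ (A *ᵥ y)) y = ∅ := by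
        apply Finset.eq_empty_of_forall_notMem
        intro X hX
        obtain ⟨-, -, -, heq⟩ := (Finset.mem_bipartiteBelow _).mp hX
        rw [hAy, Matrix.mulVec_zero] at heq
        exact hy0 (hinj y hAy heq)
      rw [hemp]
      simp
    · apply card_fixed_mulVec (A *ᵥ y) hAy (D *ᵥ y)
      intro X hX
      obtain ⟨-, -, -, heq⟩ := (Finset.mem_bipartiteBelow _).mp hX
      exact heq.symm

private lemma arith_key (q d t n : ℕ) (hq : 2 ≤ q) (hd : d ≤ t) (h2 : q = 2 → d < t)
    (hn : 1 ≤ n) :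
    2 * ((q ^ d - 1) * q ^ (t * (n - 1))) < (q - 1) * q ^ (t * n) := by
  have hps : q ^ (t * n) = q ^ (t * (n - 1)) * q ^ t := by
    rw [← pow_add]
    congr 1
    cases n with
    | zero => omega
    | succ m => simp [Nat.mul_succ]
  have key : 2 * (q ^ d - 1) < (q - 1) * q ^ t := by
    have hqd : 1 ≤ q ^ d := Nat.one_le_pow _ _ (by omega)
    by_cases hq3 : q = 2
    · subst hq3
      have hdt : d < t := h2 rfl
      have hle : 2 ^ (d + 1) ≤ 2 ^ t := Nat.pow_le_pow_right (by omega) hdt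
      rw [pow_succ] at hle
      omega
    · have hq3' : 3 ≤ q := by omega
      have hle : q ^ d ≤ q ^ t := Nat.pow_le_pow_right (by omega) hd
      have h3 : 2 * q ^ t ≤ (q - 1) * q ^ t := Nat.mul_le_mul_right _ (by omega)
      have hqt : 1 ≤ q ^ t := Nat.one_le_pow _ _ (by omega)
      omega
  have hpos : 0 < q ^ (t * (n - 1)) := Nat.pow_pos (by omega)
  calc 2 * ((q ^ d - 1) * q ^ (t * (n - 1)))
      = (2 * (q ^ d - 1)) * q ^ (t * (n - 1)) := by ring
    _ < ((q - 1) * q ^ t) * q ^ (t * (n - 1)) := by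
        exact (Nat.mul_lt_mul_right hpos).mpr key
    _ = (q - 1) * q ^ (t * n) := by rw [hps]; ring

end Helpers

set_option maxHeartbeats 2000000 in
theorem stmt_3 {F : Type*} [Field F] [Fintype F] [DecidableEq F]
    (u v n t : ℕ) (hu : 0 < u) (hv : 0 < v) (hn : 0 < n) (ht : 0 < t)
    (hnu : n ≤ u) (hnv : n ≤ v) (hsum : t + n = u + v)
    (A₁ A₂ : Matrix (Fin n) (Fin u) F) (B : Matrix (Fin n) (Fin v) F)
    (D₁ D₂ : Matrix (Fin t) (Fin u) F)
    (hBA₁ : (Matrix.of (fun i => Sum.elim (B i) (A₁ i)) :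
        Matrix (Fin n) (Fin v ⊕ Fin u) F).rank = n)
    (hBA₂ : (Matrix.of (fun i => Sum.elim (B i) (A₂ i)) :
        Matrix (Fin n) (Fin v ⊕ Fin u) F).rank = n)
    (hAD₁ : (Matrix.of (Sum.elim A₁ D₁) : Matrix (Fin n ⊕ Fin t) (Fin u) F).rank = u)
    (hAD₂ : (Matrix.of (Sum.elim A₂ D₂) : Matrix (Fin n ⊕ Fin t) (Fin u) F).rank = u)
    (hexc : ¬ (Fintype.card F = 2 ∧ n = v ∧ B.rank = n)) :
    ∃ C : Matrix (Fin t) (Fin v) F,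
      (Matrix.fromBlocks B A₁ C D₁).rank = n + t ∧
      (Matrix.fromBlocks B A₂ C D₂).rank = n + t := by
  classical
  have hq2 : 2 ≤ Fintype.card F := Fintype.one_lt_card
  -- injectivity from the (A; D) hypotheses
  have injAD : ∀ (A : Matrix (Fin n) (Fin u) F) (D : Matrix (Fin t) (Fin u) F),
      (Matrix.of (Sum.elim A D) : Matrix (Fin n ⊕ Fin t) (Fin u) F).rank = u →
      ∀ y, A *ᵥ y = 0 → D *ᵥ y = 0 → y = 0 := by
    intro A D hr y hA hD
    set M : Matrix (Fin n ⊕ Fin t) (Fin u) F := Matrix.of (Sum.elim A D) with hM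
    have h2 : finrank F (LinearMap.range M.mulVecLin) = u := hr
    have h1 := LinearMap.finrank_range_add_finrank_ker M.mulVecLin
    rw [Module.finrank_fintype_fun_eq_card, Fintype.card_fin, h2] at h1
    have hker : LinearMap.ker M.mulVecLin = ⊥ :=
      Submodule.finrank_eq_zero.mp (by omega)
    have h0 : M *ᵥ y = 0 := by
      funext k
      cases k with
      | inl i =>
        have h := congrFun hA i
        exact h
      | inr i =>
        have h := congrFun hD i
        exact h
    exact Matrix.ker_mulVecLin_eq_bot_iff.mp hker y h0
  -- surjectivity from the (B A) hypotheses
  have surjBA : ∀ (A : Matrix (Fin n) (Fin u) F),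
      (Matrix.of (fun i => Sum.elim (B i) (A i)) :
        Matrix (Fin n) (Fin v ⊕ Fin u) F).rank = n →
      ∀ w : Fin n → F, ∃ x y, B *ᵥ x + A *ᵥ y = w := by
    intro A hr w
    set N : Matrix (Fin n) (Fin v ⊕ Fin u) F := Matrix.of (fun i => Sum.elim (B i) (A i))
      with hN
    have htop : LinearMap.range N.mulVecLin = ⊤ := by
      apply Submodule.eq_top_of_finrank_eq
      rw [Module.finrank_fintype_fun_eq_card, Fintype.card_fin]
      exact hr
    obtain ⟨z, hz⟩ := LinearMap.range_eq_top.mp htop w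
    refine ⟨z ∘ Sum.inl, z ∘ Sum.inr, ?_⟩
    rw [← hz]
    funext i
    simp [hN, Matrix.mulVecLin_apply, Matrix.mulVec, dotProduct,
      Fintype.sum_sum_type, Function.comp]
  set W : Submodule F (Fin n → F) := LinearMap.range B.mulVecLin with hW
  set b := finrank F ↥W with hb
  have hbrank : B.rank = b := by rw [hb, hW]; rfl
  have hbn : b ≤ n := by
    have h := Submodule.finrank_le W
    rwa [Module.finrank_fintype_fun_eq_card, Fintype.card_fin, ← hb] at h
  have hbv : b ≤ v := by rw [← hbrank]; exact Matrix.rank_le_width B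
  have hbltv : Fintype.card F = 2 → b < v := by
    intro h2
    rcases Nat.lt_or_ge b v with h | h
    · exact h
    · exact absurd ⟨h2, by omega, by rw [hbrank]; omega⟩ hexc
  -- dimension of the preimage subspaces
  have dimY : ∀ (A : Matrix (Fin n) (Fin u) F),
      (∀ w : Fin n → F, ∃ x y, B *ᵥ x + A *ᵥ y = w) →
      finrank F (Submodule.comap A.mulVecLin W) + n = u + b := by
    intro A hsurj
    set g : (Fin u → F) →ₗ[F] ((Fin n → F) ⧸ W) := W.mkQ ∘ₗ A.mulVecLin with hg
    have hker : LinearMap.ker g = Submodule.comap A.mulVecLin W := by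
      rw [hg, LinearMap.ker_comp, Submodule.ker_mkQ]
    have hrange : LinearMap.range g = ⊤ := by
      rw [LinearMap.range_eq_top]
      intro cq
      obtain ⟨w, rfl⟩ := W.mkQ_surjective cq
      obtain ⟨x, y, hxy⟩ := hsurj w
      refine ⟨y, ?_⟩
      have hBx : W.mkQ (B *ᵥ x) = 0 := by
        rw [Submodule.mkQ_apply, Submodule.Quotient.mk_eq_zero]
        rw [hW]
        exact ⟨x, rfl⟩
      calc g y = W.mkQ (A *ᵥ y) := rfl
        _ = W.mkQ (B *ᵥ x) + W.mkQ (A *ᵥ y) := by rw [hBx, zero_add]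
        _ = W.mkQ (B *ᵥ x + A *ᵥ y) := by rw [map_add]
        _ = W.mkQ w := by rw [hxy]
    have h1 := LinearMap.finrank_range_add_finrank_ker g
    rw [hrange, hker, finrank_top, Module.finrank_fintype_fun_eq_card, Fintype.card_fin] at h1
    have h2 := Submodule.finrank_quotient_add_finrank W
    rw [Module.finrank_fintype_fun_eq_card, Fintype.card_fin, ← hb] at h2
    omega
  have hinj₁ := injAD A₁ D₁ hAD₁
  have hinj₂ := injAD A₂ D₂ hAD₂
  have hdY₁ : finrank F (Submodule.comap A₁.mulVecLin W) + n = u + b := dimY A₁ (surjBA A₁ hBA₁)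
  have hdY₂ : finrank F (Submodule.comap A₂.mulVecLin W) + n = u + b := dimY A₂ (surjBA A₂ hBA₂)
  set d := u + b - n with hd
  -- choose the matrix X avoiding both bad sets
  set Bad₁ : Finset (Matrix (Fin t) (Fin n) F) :=
    Finset.univ.filter (fun X => ∃ y, y ≠ 0 ∧ A₁ *ᵥ y ∈ W ∧ D₁ *ᵥ y = X *ᵥ (A₁ *ᵥ y)) with hBad₁
  set Bad₂ : Finset (Matrix (Fin t) (Fin n) F) :=
    Finset.univ.filter (fun X => ∃ y, y ≠ 0 ∧ A₂ *ᵥ y ∈ W ∧ D₂ *ᵥ y = X *ᵥ (A₂ *ᵥ y)) with hBad₂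
  have hbc₁ : Bad₁.card * (Fintype.card F - 1)
      ≤ (Fintype.card F ^ d - 1) * Fintype.card F ^ (t * (n - 1)) :=
    bad_card A₁ D₁ W hinj₁ d (by omega) Bad₁
      (fun X hX => (Finset.mem_filter.mp hX).2)
  have hbc₂ : Bad₂.card * (Fintype.card F - 1)
      ≤ (Fintype.card F ^ d - 1) * Fintype.card F ^ (t * (n - 1)) :=
    bad_card A₂ D₂ W hinj₂ d (by omega) Bad₂
      (fun X hX => (Finset.mem_filter.mp hX).2)
  have hcardM : Fintype.card (Matrix (Fin t) (Fin n) F) = Fintype.card F ^ (t * n) := by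
    have hc : Fintype.card (Matrix (Fin t) (Fin n) F)
        = Fintype.card (Fin t → Fin n → F) :=
      Fintype.card_congr (Matrix.of (m := Fin t) (n := Fin n) (α := F)).symm
    rw [hc, Fintype.card_fun, Fintype.card_fun, Fintype.card_fin, Fintype.card_fin,
      ← pow_mul, Nat.mul_comm]
  have hlt : (Bad₁ ∪ Bad₂).card < Fintype.card (Matrix (Fin t) (Fin n) F) := by
    have harith := arith_key (Fintype.card F) d t n hq2 (by omega)
      (fun h2 => by have := hbltv h2; omega) hn
    have h1 : (Bad₁ ∪ Bad₂).card * (Fintype.card F - 1)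
        ≤ (Bad₁.card + Bad₂.card) * (Fintype.card F - 1) :=
      Nat.mul_le_mul_right _ (Finset.card_union_le _ _)
    have h2 : (Bad₁.card + Bad₂.card) * (Fintype.card F - 1)
        ≤ 2 * ((Fintype.card F ^ d - 1) * Fintype.card F ^ (t * (n - 1))) := by
      rw [add_mul]
      omega
    rw [hcardM]
    have h3 := lt_of_le_of_lt (le_trans h1 h2) harith
    rw [Nat.mul_comm (Fintype.card F - 1)] at h3
    exact lt_of_mul_lt_mul_right h3 (Nat.zero_le _)
  obtain ⟨X, hXmem⟩ : ∃ X : Matrix (Fin t) (Fin n) F, X ∉ Bad₁ ∪ Bad₂ := by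
    by_contra h
    push_neg at h
    have hsub : (Finset.univ : Finset (Matrix (Fin t) (Fin n) F)) ⊆ Bad₁ ∪ Bad₂ :=
      fun X _ => h X
    have hcu := Finset.card_le_card hsub
    rw [Finset.card_univ] at hcu
    omega
  have hX₁ : ∀ y, y ≠ 0 → A₁ *ᵥ y ∈ W → D₁ *ᵥ y ≠ X *ᵥ (A₁ *ᵥ y) := by
    intro y hy hw heq
    exact hXmem (Finset.mem_union_left _
      (Finset.mem_filter.mpr ⟨Finset.mem_univ _, y, hy, hw, heq⟩))
  have hX₂ : ∀ y, y ≠ 0 → A₂ *ᵥ y ∈ W → D₂ *ᵥ y ≠ X *ᵥ (A₂ *ᵥ y) := by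
    intro y hy hw heq
    exact hXmem (Finset.mem_union_right _
      (Finset.mem_filter.mpr ⟨Finset.mem_univ _, y, hy, hw, heq⟩))
  -- the image subspaces T and a common disjoint complement L
  have hfrt : finrank F (Fin t → F) = t := by
    rw [Module.finrank_fintype_fun_eq_card, Fintype.card_fin]
  have hT : ∀ (A : Matrix (Fin n) (Fin u) F) (D : Matrix (Fin t) (Fin u) F),
      finrank F (Submodule.comap A.mulVecLin W) + n = u + b →
      finrank F (Submodule.map (D.mulVecLin - X.mulVecLin ∘ₗ A.mulVecLin)
        (Submodule.comap A.mulVecLin W)) + (v - b) ≤ finrank F (Fin t → F) := by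
    intro A D hdim
    have h1 := Submodule.finrank_map_le (D.mulVecLin - X.mulVecLin ∘ₗ A.mulVecLin)
      (Submodule.comap A.mulVecLin W)
    rw [hfrt]
    omega
  obtain ⟨L, hLr, hdis₁, hdis₂⟩ := exists_disjoint (v - b)
    (Submodule.map (D₁.mulVecLin - X.mulVecLin ∘ₗ A₁.mulVecLin)
      (Submodule.comap A₁.mulVecLin W))
    (Submodule.map (D₂.mulVecLin - X.mulVecLin ∘ₗ A₂.mulVecLin)
      (Submodule.comap A₂.mulVecLin W))
    (hT A₁ D₁ hdY₁) (hT A₂ D₂ hdY₂)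
  set K := LinearMap.ker B.mulVecLin with hK
  have hKr : b + finrank F ↥K = v := by
    have h := LinearMap.finrank_range_add_finrank_ker B.mulVecLin
    rwa [Module.finrank_fintype_fun_eq_card, Fintype.card_fin, ← hW, ← hb, ← hK] at h
  have heqKL : finrank F ↥K = finrank F ↥L := by omega
  have e : ↥K ≃ₗ[F] ↥L := LinearEquiv.ofFinrankEq _ _ heqKL
  obtain ⟨P, hP⟩ := Submodule.exists_isCompl K
  set pr : (Fin v → F) →ₗ[F] ↥K := K.linearProjOfIsCompl P hP with hpr
  set γ : (Fin v → F) →ₗ[F] (Fin t → F) :=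
    X.mulVecLin ∘ₗ B.mulVecLin + L.subtype ∘ₗ e.toLinearMap ∘ₗ pr with hγ
  set C := LinearMap.toMatrix' γ with hCdef
  have hCmul : ∀ x, C *ᵥ x = γ x := by
    intro x
    conv_rhs => rw [← Matrix.toLin'_toMatrix' γ, Matrix.toLin'_apply']
    rw [hCdef, Matrix.mulVecLin_apply]
  -- the main verification, applied to each of the two systems
  have main : ∀ (A : Matrix (Fin n) (Fin u) F) (D : Matrix (Fin t) (Fin u) F),
      (∀ y, y ≠ 0 → A *ᵥ y ∈ W → D *ᵥ y ≠ X *ᵥ (A *ᵥ y)) →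
      Disjoint (Submodule.map (D.mulVecLin - X.mulVecLin ∘ₗ A.mulVecLin)
        (Submodule.comap A.mulVecLin W)) L →
      (Matrix.fromBlocks B A C D).rank = n + t := by
    intro A D hXg hdis
    have hker : ∀ z : (Fin v ⊕ Fin u) → F, (Matrix.fromBlocks B A C D) *ᵥ z = 0 → z = 0 := by
      intro z hz
      rw [Matrix.fromBlocks_mulVec] at hz
      set x : Fin v → F := z ∘ Sum.inl with hx
      set y : Fin u → F := z ∘ Sum.inr with hy
      have h1 : B *ᵥ x + A *ᵥ y = 0 := funext fun i => congrFun hz (Sum.inl i)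
      have h2 : C *ᵥ x + D *ᵥ y = 0 := funext fun i => congrFun hz (Sum.inr i)
      have hAy : A *ᵥ y = -(B *ᵥ x) := eq_neg_of_add_eq_zero_right h1
      have hBxW : B *ᵥ x ∈ W := by rw [hW]; exact ⟨x, rfl⟩
      have hAyW : A *ᵥ y ∈ W := by rw [hAy]; exact W.neg_mem hBxW
      have hyY : y ∈ Submodule.comap A.mulVecLin W := by
        rw [Submodule.mem_comap, Matrix.mulVecLin_apply]; exact hAyW
      have hBx : B *ᵥ x = -(A *ᵥ y) := by rw [hAy, neg_neg]
      have hγx : C *ᵥ x = X *ᵥ (B *ᵥ x) + L.subtype (e.toLinearMap (pr x)) := by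
        rw [hCmul, hγ]
        simp [Matrix.mulVecLin_apply]
      have hψval : (D.mulVecLin - X.mulVecLin ∘ₗ A.mulVecLin) y
          = D *ᵥ y - X *ᵥ (A *ᵥ y) := by
        simp [Matrix.mulVecLin_apply]
      have h4 : (D.mulVecLin - X.mulVecLin ∘ₗ A.mulVecLin) y
          + L.subtype (e.toLinearMap (pr x)) = 0 := by
        rw [hψval]
        rw [hγx, hBx, Matrix.mulVec_neg] at h2
        calc D *ᵥ y - X *ᵥ (A *ᵥ y) + L.subtype (e.toLinearMap (pr x))
            = -(X *ᵥ (A *ᵥ y)) + L.subtype (e.toLinearMap (pr x)) + D *ᵥ y := by abel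
          _ = 0 := h2
      have hTmem : (D.mulVecLin - X.mulVecLin ∘ₗ A.mulVecLin) y
          ∈ Submodule.map (D.mulVecLin - X.mulVecLin ∘ₗ A.mulVecLin)
              (Submodule.comap A.mulVecLin W) :=
        Submodule.mem_map_of_mem hyY
      have hLmem : (D.mulVecLin - X.mulVecLin ∘ₗ A.mulVecLin) y ∈ L := by
        have h5 : (D.mulVecLin - X.mulVecLin ∘ₗ A.mulVecLin) y
            = -(L.subtype (e.toLinearMap (pr x))) := eq_neg_of_add_eq_zero_left h4
        rw [h5]
        exact L.neg_mem (e.toLinearMap (pr x)).2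
      have hψ0 : (D.mulVecLin - X.mulVecLin ∘ₗ A.mulVecLin) y = 0 :=
        Submodule.disjoint_def.mp hdis _ hTmem hLmem
      have hy0 : y = 0 := by
        by_contra hy0
        apply hXg y hy0 hAyW
        rw [hψval] at hψ0
        exact sub_eq_zero.mp hψ0
      have hE0 : L.subtype (e.toLinearMap (pr x)) = 0 := by
        rw [hψ0, zero_add] at h4
        exact h4
      have hx0 : x = 0 := by
        have hBx0 : B *ᵥ x = 0 := by rw [hBx, hy0, Matrix.mulVec_zero, neg_zero]
        have hxK : x ∈ K := by
          rw [hK, LinearMap.mem_ker, Matrix.mulVecLin_apply]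
          exact hBx0
        have hprx : pr x = ⟨x, hxK⟩ := by
          have h := Submodule.linearProjOfIsCompl_apply_left hP (⟨x, hxK⟩ : ↥K)
          exact h
        have hecoe : e.toLinearMap (pr x) = 0 := by
          apply Submodule.injective_subtype L
          rw [map_zero]
          exact hE0
        have hpr0 : pr x = 0 := by
          have h0 : e (pr x) = 0 := hecoe
          exact e.map_eq_zero_iff.mp h0
        rw [hprx] at hpr0
        simpa using congrArg Subtype.val hpr0
      funext k
      cases k with
      | inl i => exact congrFun hx0 i
      | inr i => exact congrFun hy0 i
    have hinjM : Function.Injective (Matrix.fromBlocks B A C D).mulVecLin := by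
      rw [← LinearMap.ker_eq_bot]
      exact Matrix.ker_mulVecLin_eq_bot_iff.mpr hker
    have hr : (Matrix.fromBlocks B A C D).rank
        = finrank F ((Fin v ⊕ Fin u) → F) := LinearMap.finrank_range_of_inj hinjM
    rw [Module.finrank_fintype_fun_eq_card, Fintype.card_sum, Fintype.card_fin,
      Fintype.card_fin] at hr
    omega
  exact ⟨C, main A₁ D₁ hX₁ hdis₁, main A₂ D₂ hX₂ hdis₂⟩
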